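/- Let A be an integral domain which is finitely generated as a ℂ-algebra and is a Dedekind domain, let I be a nonzero ideal of A, and let V be an A-module which is finite-dimensional as a ℂ-vector space. Then Hom_A(I, V) is a finite-dimensional ℂ-vector space and dim_ℂ Hom_A(I, V) = dim_ℂ V. -/

import Mathlib

open Ideal UniqueFactorizationMonoid

/-- Cancellation of ideals in a Dedekind domain. -/
lemma stmt8_cancel {A : Type*} [CommRing A] [IsDomain A] [IsDedekindDomain A]
    {I X Y : Ideal A} (hI : I ≠ ⊥) (h : I * X ≤ I * Y) : X ≤ Y := by
  rw [← Ideal.dvd_iff_le] at h ⊢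
  exact (mul_dvd_mul_iff_left (show I ≠ 0 from hI)).mp h

/-- In a Dedekind domain, any nonzero ideal `I` has an element generating it modulo `I*J`. -/
lemma stmt8_exists_gen {A : Type*} [CommRing A] [IsDomain A] [IsDedekindDomain A]
    (I J : Ideal A) (hI : I ≠ ⊥) (hJ : J ≠ ⊥) :
    ∃ a ∈ I, I ≤ Ideal.span {a} ⊔ I * J := by
  classical
  set s := (normalizedFactors J).toFinset with hs
  have hprime : ∀ p ∈ s, Prime p := fun p hp =>
    prime_of_normalized_factor p (Multiset.mem_toFinset.mp hp)
  set Q : Ideal A → Ideal A := fun p => ∏ q ∈ s.erase p, q with hQ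
  have hQne : ∀ p, Q p ≠ 0 := fun p =>
    Finset.prod_ne_zero_iff.mpr fun q hq => (hprime q (Finset.mem_of_mem_erase hq)).ne_zero
  have hI0 : (I : Ideal A) ≠ 0 := hI
  have hstep : ∀ p ∈ s, ∃ x, x ∈ I * Q p ∧ x ∉ I * Q p * p := by
    intro p hp
    have h1 : I * Q p ≠ 0 := mul_ne_zero hI0 (hQne p)
    have hlt : I * Q p * p < I * Q p := by
      refine lt_of_le_of_ne Ideal.mul_le_left fun heq => ?_
      have hp1 : p = 1 := mul_left_cancel₀ h1 (heq.trans (mul_one _).symm)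
      exact (hprime p hp).not_isUnit (hp1 ▸ isUnit_one)
    obtain ⟨x, hx1, hx2⟩ := SetLike.exists_of_lt hlt
    exact ⟨x, hx1, hx2⟩
  choose! x hx1 hx2 using hstep
  set a := ∑ p ∈ s, x p with ha
  have hxI : ∀ p ∈ s, x p ∈ I := fun p hp => Ideal.mul_le_left (hx1 p hp)
  have haI : a ∈ I := Submodule.sum_mem _ hxI
  have key : ∀ p ∈ s, a ∉ I * p := by
    intro p hp hmem
    have hptop : p ≠ ⊤ := fun h => (hprime p hp).not_isUnit (Ideal.isUnit_iff.mpr h)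
    have hother : ∀ q ∈ s.erase p, x q ∈ I * p := by
      intro q hq
      have hps : p ∈ s.erase q :=
        Finset.mem_erase.mpr ⟨fun h => (Finset.mem_erase.mp hq).1 h.symm, hp⟩
      have hpq : Q q ≤ p := Ideal.dvd_iff_le.mp (Finset.dvd_prod_of_mem _ hps)
      exact Ideal.mul_mono_right hpq (hx1 q (Finset.mem_of_mem_erase hq))
    have hxp : x p ∈ I * p := by
      have hsum : x p = a - ∑ q ∈ s.erase p, x q := by
        rw [ha, ← Finset.add_sum_erase s x hp]; ring
      rw [hsum]
      exact sub_mem hmem (Submodule.sum_mem _ hother)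
    obtain ⟨E, hE⟩ := Ideal.dvd_span_singleton.mpr (hx1 p hp)
    have hd2 : I * p ∣ Ideal.span {x p} := Ideal.dvd_span_singleton.mpr hxp
    rw [hE, mul_assoc] at hd2
    have hpdvd : p ∣ Q p * E := (mul_dvd_mul_iff_left hI0).mp hd2
    rcases (hprime p hp).dvd_mul.mp hpdvd with h | h
    · obtain ⟨q, hq, hpq⟩ := Prime.exists_mem_finset_dvd (hprime p hp) h
      have hq0 : q ≠ ⊥ := (hprime q (Finset.mem_of_mem_erase hq)).ne_zero
      have hqmax : q.IsMaximal :=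
        Ideal.IsPrime.isMaximal (Ideal.isPrime_of_prime (hprime q (Finset.mem_of_mem_erase hq))) hq0
      have hqp : q = p := hqmax.eq_of_le hptop (Ideal.dvd_iff_le.mp hpq)
      exact (Finset.mem_erase.mp hq).1 hqp
    · refine hx2 p hp ?_
      have : I * Q p * p ∣ Ideal.span {x p} := by
        rw [hE]; exact mul_dvd_mul_left _ h
      exact Ideal.dvd_span_singleton.mp this
  refine ⟨a, haI, ?_⟩
  have hDI : Ideal.span {a} ⊔ I * J ≤ I :=
    sup_le ((Ideal.span_singleton_le_iff_mem _).mpr haI) Ideal.mul_le_left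
  obtain ⟨E, hE⟩ := Ideal.dvd_iff_le.mpr hDI
  by_cases hEtop : E = ⊤
  · rw [hE, hEtop, Ideal.mul_top]
  · obtain ⟨m, hm, hEm⟩ := Ideal.exists_le_maximal E hEtop
    have hJE : J ≤ E := stmt8_cancel hI (by rw [← hE]; exact le_sup_right)
    have hJm : J ≤ m := hJE.trans hEm
    have hms : m ∈ s :=
      Multiset.mem_toFinset.mpr ((Ideal.mem_normalizedFactors_iff hJ).mpr ⟨hm.isPrime, hJm⟩)
    have haD : a ∈ I * E := by
      rw [← hE]; exact Submodule.mem_sup_left (Ideal.mem_span_singleton_self a)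
    exact absurd (Ideal.mul_mono_right hEm haD) (key m hms)

/-- The key construction: evaluation at a good element `a` is a `ℂ`-linear equivalence. -/
lemma stmt8_key {A : Type*} [CommRing A] [IsDomain A] [Algebra ℂ A]
    (I : Ideal A)
    {V : Type*} [AddCommGroup V] [Module A V] [Module ℂ V] [IsScalarTower ℂ A V]
    (J : Ideal A) (hJ : J = Module.annihilator A V)
    (a : A) (ha : a ∈ I) (h1 : I ≤ Ideal.span {a} ⊔ I * J)
    (h2 : ∀ x : A, x * a ∈ I * J → x ∈ J) :
    ∃ _ : (↥I →ₗ[A] V) ≃ₗ[ℂ] V, True := by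
  classical
  have hann : ∀ j ∈ J, ∀ v : V, j • v = 0 := by
    intro j hj v
    exact Module.mem_annihilator.mp (hJ ▸ hj) v
  -- the evaluation map
  set φ : (↥I →ₗ[A] V) →ₗ[ℂ] V :=
    { toFun := fun f => f ⟨a, ha⟩
      map_add' := fun f g => rfl
      map_smul' := fun c f => rfl } with hφ
  -- split elements of I
  have hsplit : ∀ y ∈ I, ∃ r : A, y - r * a ∈ I * J := by
    intro y hy
    obtain ⟨u, hu, z, hz, huz⟩ := Submodule.mem_sup.mp (h1 hy)
    obtain ⟨r, hr⟩ := Ideal.mem_span_singleton'.mp hu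
    exact ⟨r, by rw [hr]; rw [← huz]; simpa using hz⟩
  -- vanishing on I*J
  have hIJ : ∀ (f : ↥I →ₗ[A] V) (m : A), m ∈ I * J → ∃ hm : m ∈ I, f ⟨m, hm⟩ = 0 := by
    intro f m hmIJ
    refine Submodule.mul_induction_on hmIJ ?_ ?_
    · intro i hi j hj
      refine ⟨Ideal.mul_mem_right j I hi, ?_⟩
      have : (⟨i * j, Ideal.mul_mem_right j I hi⟩ : ↥I) = j • ⟨i, hi⟩ := by
        ext; simp [mul_comm, Submodule.coe_smul, smul_eq_mul]
      rw [this, map_smul, hann j hj]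
    · rintro p q ⟨hp, ep⟩ ⟨hq, eq⟩
      refine ⟨add_mem hp hq, ?_⟩
      have : (⟨p + q, add_mem hp hq⟩ : ↥I) = ⟨p, hp⟩ + ⟨q, hq⟩ := rfl
      rw [this, map_add, ep, eq, add_zero]
  have hinj : Function.Injective φ := by
    intro f g hfg
    have hfg0 : (f - g) ⟨a, ha⟩ = 0 := by
      simp only [LinearMap.sub_apply]
      rw [show f ⟨a, ha⟩ = g ⟨a, ha⟩ from hfg, sub_self]
    ext ⟨y, hy⟩
    rw [← sub_eq_zero, ← LinearMap.sub_apply]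
    set F := f - g with hF
    obtain ⟨r, hr⟩ := hsplit y hy
    obtain ⟨hmI, hm0⟩ := hIJ F _ hr
    have hyF : (⟨y, hy⟩ : ↥I) = r • ⟨a, ha⟩ + ⟨y - r * a, hmI⟩ := by
      ext; simp only [Submodule.coe_add, SetLike.val_smul, smul_eq_mul]; ring
    rw [hyF, map_add, map_smul, hfg0, hm0, smul_zero, add_zero]
  have hsurj : Function.Surjective φ := by
    intro v
    -- choose coefficients
    have hch : ∀ y : ↥I, ∃ r : A, (y : A) - r * a ∈ I * J := fun y => hsplit y y.2
    choose r hr using hch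
    have wd : ∀ (y : A) (t u : A), y - t * a ∈ I * J → y - u * a ∈ I * J → t • v = u • v := by
      intro y t u hty huy
      have h3 : (t - u) * a ∈ I * J := by
        have : (t - u) * a = (y - u * a) - (y - t * a) := by ring
        rw [this]; exact sub_mem huy hty
      have h4 : t - u ∈ J := h2 _ h3
      have h5 : (t - u) • v = 0 := hann _ h4 v
      rw [sub_smul, sub_eq_zero] at h5
      exact h5
    set f : ↥I →ₗ[A] V :=
      { toFun := fun y => r y • v
        map_add' := by
          intro y z
          show r (y + z) • v = r y • v + r z • v
          have hmem : ((y + z : ↥I) : A) - (r y + r z) * a ∈ I * J := by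
            have : ((y + z : ↥I) : A) - (r y + r z) * a
                = ((y : A) - r y * a) + ((z : A) - r z * a) := by
              push_cast; ring
            rw [this]; exact add_mem (hr y) (hr z)
          rw [wd _ _ _ (hr (y + z)) hmem, add_smul]
        map_smul' := by
          intro c y
          have hmem : ((c • y : ↥I) : A) - (c * r y) * a ∈ I * J := by
            have : ((c • y : ↥I) : A) - (c * r y) * a = c * ((y : A) - r y * a) := by
              push_cast [smul_eq_mul]; ring
            rw [this]; exact Ideal.mul_mem_left _ c (hr y)
          rw [RingHom.id_apply]
          show r (c • y) • v = c • (r y • v)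
          calc r (c • y) • v = (c * r y) • v := wd _ _ _ (hr (c • y)) hmem
            _ = c • r y • v := by rw [mul_smul]
        } with hf
    refine ⟨f, ?_⟩
    show r ⟨a, ha⟩ • v = v
    have hmem : (a : A) - 1 * a ∈ I * J := by simp
    rw [wd _ _ _ (hr ⟨a, ha⟩) hmem, one_smul]
  exact ⟨LinearEquiv.ofBijective φ ⟨hinj, hsurj⟩, trivial⟩

/-- Let `A` be the coordinate ring of a smooth affine irreducible curve
over ℂ (an integral domain, finitely generated as a ℂ-algebra, which is a Dedekind
domain), `I` a nonzero ideal of `A`, and `V` an `A`-module which is finite-dimensional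
over ℂ.  Then `Hom_A(I, V)` is finite-dimensional over ℂ of dimension `dim_ℂ V`. -/
theorem stmt8 {A : Type*} [CommRing A] [IsDomain A] [IsDedekindDomain A] [Algebra ℂ A]
    (hfg : Algebra.FiniteType ℂ A)
    (I : Ideal A) (hI : I ≠ ⊥)
    {V : Type*} [AddCommGroup V] [Module A V] [Module ℂ V] [IsScalarTower ℂ A V]
    [FiniteDimensional ℂ V] :
    FiniteDimensional ℂ (↥I →ₗ[A] V) ∧
      Module.finrank ℂ (↥I →ₗ[A] V) = Module.finrank ℂ V := by
  classical
  set J := Module.annihilator A V with hJ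
  -- get a good generator
  have hgen : ∃ a ∈ I, I ≤ Ideal.span {a} ⊔ I * J := by
    by_cases hJbot : J = ⊥
    · -- then A is a field and I = ⊤
      haveI : SMulCommClass ℂ A V := ⟨fun c b v => by
        rw [← IsScalarTower.algebraMap_smul A c v, ← mul_smul, mul_comm, mul_smul,
          IsScalarTower.algebraMap_smul A c (b • v)]⟩
      haveI : Algebra.IsIntegral ℂ A := by
        constructor
        intro b
        have hfin : IsIntegral ℂ ((Algebra.lsmul ℂ ℂ V : A →ₐ[ℂ] Module.End ℂ V) b) :=
          IsIntegral.of_finite ℂ _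
        refine (isIntegral_algHom_iff (Algebra.lsmul ℂ ℂ V) ?_).mp hfin
        intro b₁ b₂ hb
        have : b₁ - b₂ ∈ J := Module.mem_annihilator.mpr fun m => by
          have := congrArg (fun (g : Module.End ℂ V) => g m) hb
          simp only [Algebra.lsmul_coe] at this
          rw [sub_smul, this, sub_self]
        rw [hJbot, Ideal.mem_bot, sub_eq_zero] at this
        exact this
      have hField : IsField A :=
        isField_of_isIntegral_of_isField' (Field.toIsField ℂ)
      obtain ⟨y, hyI, hy0⟩ := Submodule.exists_mem_ne_zero_of_ne_bot hI
      obtain ⟨z, hz⟩ := hField.mul_inv_cancel hy0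
      have h1I : (1 : A) ∈ I := by rw [← hz]; exact Ideal.mul_mem_right z I hyI
      refine ⟨1, h1I, ?_⟩
      have : Ideal.span {(1 : A)} = ⊤ := Ideal.span_singleton_one
      rw [this]
      exact le_trans le_top le_sup_left
    · exact stmt8_exists_gen I J hI hJbot
  obtain ⟨a, ha, h1⟩ := hgen
  have h2 : ∀ x : A, x * a ∈ I * J → x ∈ J := by
    intro x hx
    have hle : I * Ideal.span {x} ≤ I * J := by
      rw [mul_comm]
      refine Ideal.mul_le.mpr fun u hu s hs => ?_
      obtain ⟨c, hc⟩ := Ideal.mem_span_singleton'.mp hu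
      obtain ⟨d, hd, z, hz, hdz⟩ := Submodule.mem_sup.mp (h1 hs)
      obtain ⟨e, he⟩ := Ideal.mem_span_singleton'.mp hd
      have : u * s = c * e * (x * a) + c * (x * z) := by
        rw [← hc, ← hdz, ← he]; ring
      rw [this]
      exact add_mem (Ideal.mul_mem_left _ _ hx) (Ideal.mul_mem_left _ _ (Ideal.mul_mem_left _ x hz))
    have := stmt8_cancel hI hle
    exact this (Ideal.mem_span_singleton_self x)
  obtain ⟨e, -⟩ := stmt8_key I J hJ a ha h1 h2
  exact ⟨Module.Finite.equiv e.symm, e.finrank_eq⟩
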